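/- Let (𝔫, ⟨·,·⟩) be a 2-step nilpotent metric Lie algebra admitting an invertible Killing-Yano tensor. Then 𝔫 admits a bi-invariant orthogonal complex structure: there exists an endomorphism J of 𝔫 with J² = −id, J[x, y] = [Jx, y] = [x, Jy] for all x, y ∈ 𝔫, and ⟨Jx, Jy⟩ = ⟨x, y⟩ for all x, y ∈ 𝔫. -/

import Mathlib

section Defs

variable {g : Type*} [LieRing g] [LieAlgebra ℝ g]

/-- `B` is a (positive definite) inner product on the real Lie algebra `g`,
given as a bilinear form. -/
structure IsInnerProduct (B : g →ₗ[ℝ] g →ₗ[ℝ] ℝ) : Prop where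
  symm : ∀ x y : g, B x y = B y x
  posdef : ∀ x : g, x ≠ 0 → 0 < B x x

/-- The Koszul formula characterizing the Levi-Civita connection of the metric Lie
algebra `(g, B)`: `2⟨∇ₓy, z⟩ = ⟨[x,y], z⟩ − ⟨[y,z], x⟩ + ⟨[z,x], y⟩`. -/
def IsLeviCivita (B : g →ₗ[ℝ] g →ₗ[ℝ] ℝ) (D : g → g → g) : Prop :=
  ∀ x y z : g, 2 * B (D x y) z = B ⁅x, y⁆ z - B ⁅y, z⁆ x + B ⁅z, x⁆ y

/-- A skew-symmetric endomorphism with respect to `B`. -/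
def IsSkewSymmetric (B : g →ₗ[ℝ] g →ₗ[ℝ] ℝ) (T : g →ₗ[ℝ] g) : Prop :=
  ∀ x y : g, B (T x) y = - B x (T y)

/-- The conformal Killing-Yano equation for an endomorphism `T` with associated 1-form `θ`:
`⟨(∇ₓT)y, z⟩ + ⟨(∇_yT)x, z⟩ = 2⟨x,y⟩θ(z) − ⟨y,z⟩θ(x) − ⟨x,z⟩θ(y)`,
where `(∇ₓT)y = ∇ₓ(Ty) − T(∇ₓy)`. -/
def IsCKYWith (B : g →ₗ[ℝ] g →ₗ[ℝ] ℝ) (D : g → g → g) (T : g →ₗ[ℝ] g)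
    (θ : g →ₗ[ℝ] ℝ) : Prop :=
  ∀ x y z : g,
    B (D x (T y) - T (D x y)) z + B (D y (T x) - T (D y x)) z =
      2 * B x y * θ z - B y z * θ x - B x z * θ y

/-- A Killing-Yano tensor is a CKY tensor with `θ = 0`. -/
def IsKY (B : g →ₗ[ℝ] g →ₗ[ℝ] ℝ) (D : g → g → g) (T : g →ₗ[ℝ] g) : Prop :=
  IsCKYWith B D T 0

/-- A parallel tensor: `(∇ₓT)y = 0` for all `x, y`. -/
def IsParallelT (D : g → g → g) (T : g →ₗ[ℝ] g) : Prop :=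
  ∀ x y : g, D x (T y) - T (D x y) = 0

/-- The orthogonal complement of a submodule with respect to the bilinear form `B`. -/
def orthComp (B : g →ₗ[ℝ] g →ₗ[ℝ] ℝ) (p : Submodule ℝ g) : Submodule ℝ g where
  carrier := {x : g | ∀ y ∈ p, B x y = 0}
  add_mem' := by
    intro a b ha hb y hy
    simp only [map_add, LinearMap.add_apply, ha y hy, hb y hy, add_zero]
  zero_mem' := by
    intro y hy
    simp
  smul_mem' := by
    intro c a ha y hy
    simp only [map_smul, LinearMap.smul_apply, ha y hy, smul_eq_mul, mul_zero]

end Defs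

/-- A 2-step nilpotent metric Lie algebra admitting an invertible
Killing-Yano tensor admits a bi-invariant orthogonal complex structure. -/
theorem two_step_invertible_ky_biinvariant_complex {n : Type*} [LieRing n] [LieAlgebra ℝ n]
    [FiniteDimensional ℝ n]
    (B : n →ₗ[ℝ] n →ₗ[ℝ] ℝ) (hB : IsInnerProduct B)
    (hnonab : ∃ x y : n, ⁅x, y⁆ ≠ 0)
    (h2step : ∀ x y z : n, ⁅x, ⁅y, z⁆⁆ = 0)
    (D : n → n → n) (hD : IsLeviCivita B D)
    (T : n →ₗ[ℝ] n) (hT : IsSkewSymmetric B T) (hTinv : Function.Bijective T)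
    (hKY : IsKY B D T) :
    ∃ J : n →ₗ[ℝ] n, (∀ x : n, J (J x) = -x) ∧
      (∀ x y : n, J ⁅x, y⁆ = ⁅J x, y⁆) ∧ (∀ x y : n, ⁅J x, y⁆ = ⁅x, J y⁆) ∧
      (∀ x y : n, B (J x) (J y) = B x y) := by
  classical
  have hbr : ∀ a b u : n, ⁅⁅a, b⁆, u⁆ = 0 := by
    intro a b u
    rw [← lie_skew, h2step, neg_zero]
  have hzero : ∀ u : n, B u u = 0 → u = 0 := by
    intro u hu
    by_contra h
    exact absurd hu (ne_of_gt (hB.posdef u h))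
  have hCr : ∀ c : n, (∀ u : n, ⁅c, u⁆ = 0) → ∀ u : n, ⁅u, c⁆ = 0 := by
    intro c hc u
    rw [← lie_skew, hc u, neg_zero]
  have hBneg : ∀ a b u : n, B ⁅a, b⁆ u = - B ⁅b, a⁆ u := by
    intro a b u
    have h : (⁅a, b⁆ : n) = -⁅b, a⁆ := (lie_skew a b).symm
    rw [h, map_neg, LinearMap.neg_apply]
  have key : ∀ x y z : n,
      (B ⁅x, T y⁆ z - B ⁅T y, z⁆ x + B ⁅z, x⁆ (T y))
      + (B ⁅x, y⁆ (T z) - B ⁅y, T z⁆ x + B ⁅T z, x⁆ y)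
      + (B ⁅y, T x⁆ z - B ⁅T x, z⁆ y + B ⁅z, y⁆ (T x))
      + (B ⁅y, x⁆ (T z) - B ⁅x, T z⁆ y + B ⁅T z, y⁆ x) = 0 := by
    intro x y z
    have e := hKY x y z
    simp only [map_sub, LinearMap.sub_apply, LinearMap.zero_apply, mul_zero, sub_zero] at e
    linear_combination 2 * e + 2 * hT (D x y) z + 2 * hT (D y x) z
      - hD x (T y) z - hD x y (T z) - hD y (T x) z - hD y x (T z)
  have hA2 : ∀ c c' x : n, (∀ u : n, ⁅c, u⁆ = 0) → (∀ u : n, ⁅c', u⁆ = 0) →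
      B ⁅x, T c'⁆ c = 2 * B ⁅x, T c⁆ c' := by
    intro c c' x hc hc'
    have k := key x c' c
    simp only [hc, hc', hCr c hc, hCr c' hc', map_zero, LinearMap.zero_apply,
      LinearMap.map_zero, sub_zero, zero_sub, add_zero, zero_add, neg_zero] at k
    linear_combination k - hBneg (T c) x c'
  have hBz : ∀ c c' x : n, (∀ u : n, ⁅c, u⁆ = 0) → (∀ u : n, ⁅c', u⁆ = 0) →
      B ⁅x, T c⁆ c' = 0 := by
    intro c c' x hc hc'
    have h1 := hA2 c c' x hc hc'
    have h2 := hA2 c' c x hc' hc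
    linarith
  have hTcen : ∀ c : n, (∀ u : n, ⁅c, u⁆ = 0) → ∀ u : n, ⁅T c, u⁆ = 0 := by
    intro c hc u
    have h0 : (⁅u, T c⁆ : n) = 0 :=
      hzero _ (hBz c ⁅u, T c⁆ u hc (hbr u (T c)))
    rw [← lie_skew, h0, neg_zero]
  have haux : ∀ x y c : n, (∀ u : n, ⁅c, u⁆ = 0) →
      B ⁅x, T y⁆ c + B ⁅y, T x⁆ c = 0 := by
    intro x y c hc
    have hTc := hTcen _ hc
    have k := key x y c
    simp only [hc, hCr _ hc, hTc, hCr _ hTc, map_zero, LinearMap.zero_apply,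
      LinearMap.map_zero, sub_zero, zero_sub, add_zero, zero_add, neg_zero] at k
    linear_combination k - hBneg y x (T c)
  have hG1 : ∀ x y : n, ⁅T x, y⁆ = ⁅x, T y⁆ := by
    intro x y
    have hcv : ∀ u : n, ⁅(⁅x, T y⁆ + ⁅y, T x⁆ : n), u⁆ = 0 := by
      intro u
      rw [add_lie, hbr, hbr, add_zero]
    have hv : (⁅x, T y⁆ + ⁅y, T x⁆ : n) = 0 := by
      apply hzero
      rw [show B (⁅x, T y⁆ + ⁅y, T x⁆) = B ⁅x, T y⁆ + B ⁅y, T x⁆ from map_add B _ _,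
        LinearMap.add_apply]
      exact haux x y _ hcv
    have h1 : (⁅x, T y⁆ : n) = -⁅y, T x⁆ := eq_neg_of_add_eq_zero_left hv
    rw [h1]
    exact (lie_skew (T x) y).symm
  have haux2 : ∀ w x c : n, (∀ u : n, ⁅c, u⁆ = 0) →
      3 * B ⁅T w, x⁆ c - B (T ⁅w, x⁆) c = 0 := by
    intro w x c hc
    have hTc := hTcen _ hc
    have k := key x c w
    simp only [hc, hCr _ hc, hTc, hCr _ hTc, map_zero, LinearMap.zero_apply,
      LinearMap.map_zero, sub_zero, zero_sub, add_zero, zero_add, neg_zero] at k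
    have e1 : B (T ⁅w, x⁆) c = - B ⁅w, x⁆ (T c) := hT ⁅w, x⁆ c
    have e2' : B ⁅T x, w⁆ c = B ⁅x, T w⁆ c := by rw [hG1 x w]
    have e3 : B ⁅x, T w⁆ c = - B ⁅T w, x⁆ c := hBneg x (T w) c
    linear_combination k - e1 + e2' + 2 * e3
  have hG2 : ∀ w x : n, T ⁅w, x⁆ = (3:ℝ) • ⁅T w, x⁆ := by
    intro w x
    have hcv : ∀ u : n, ⁅((3:ℝ) • ⁅T w, x⁆ - T ⁅w, x⁆ : n), u⁆ = 0 := by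
      intro u
      rw [sub_lie, smul_lie, hbr, smul_zero, hTcen ⁅w, x⁆ (hbr w x) u, sub_zero]
    have hv : ((3:ℝ) • ⁅T w, x⁆ - T ⁅w, x⁆ : n) = 0 := by
      apply hzero
      rw [show B ((3:ℝ) • ⁅T w, x⁆ - T ⁅w, x⁆) = (3:ℝ) • B ⁅T w, x⁆ - B (T ⁅w, x⁆) from by
          rw [map_sub, map_smul],
        LinearMap.sub_apply, LinearMap.smul_apply, smul_eq_mul]
      exact haux2 w x _ hcv
    exact (sub_eq_zero.mp hv).symm
  -- the positive symmetric operator P = -T²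
  set P : n →ₗ[ℝ] n := -(T ∘ₗ T) with hPdef
  have hPapp : ∀ x : n, P x = -T (T x) := fun x => rfl
  have hTT : ∀ x : n, T (T x) = -P x := fun x => by rw [hPapp, neg_neg]
  have hPB : ∀ x y : n, B (P x) y = B (T x) (T y) := by
    intro x y
    rw [hPapp, map_neg, LinearMap.neg_apply, hT (T x) y, neg_neg]
  have hPB2 : ∀ x y : n, B x (P y) = B (T x) (T y) := by
    intro x y
    rw [hPapp, map_neg]
    linear_combination - hT x (T y)
  have hPbr1 : ∀ x y : n, ⁅P x, y⁆ = ⁅x, P y⁆ := by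
    intro x y
    rw [hPapp, hPapp, neg_lie, lie_neg, hG1 (T x) y, ← hG1 x (T y)]
  have hPbr2 : ∀ x y : n, P ⁅x, y⁆ = (9:ℝ) • ⁅P x, y⁆ := by
    intro x y
    rw [hPapp, hG2 x y, map_smul, hG2 (T x) y, hPapp, neg_lie]
    module
  have hPT : ∀ x : n, P (T x) = T (P x) := by
    intro x
    rw [hPapp, hPapp, map_neg]
  have hTne : ∀ x : n, x ≠ 0 → T x ≠ 0 := by
    intro x hx h
    exact hx (hTinv.injective (h.trans (map_zero T).symm))
  have hPpos : ∀ x : n, x ≠ 0 → 0 < B (P x) x := by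
    intro x hx
    rw [hPB]
    exact hB.posdef (T x) (hTne x hx)
  -- inner product space structure coming from B
  letI iCore : InnerProductSpace.Core ℝ n :=
    { inner := fun x y => B x y
      conj_inner_symm := fun x y => by simpa using hB.symm y x
      re_inner_nonneg := fun x => by
        rcases eq_or_ne x 0 with h | h
        · simp [h]
        · simpa using (hB.posdef x h).le
      definite := fun x hx => hzero x hx
      add_left := fun x y z => by simp
      smul_left := fun x y r => by simp }
  letI iNorm : NormedAddCommGroup n := iCore.toNormedAddCommGroup
  letI iIPS : InnerProductSpace ℝ n := InnerProductSpace.ofCore iCore.toCore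
  letI iFD : FiniteDimensional ℝ n := ‹FiniteDimensional ℝ n›
  have hinner : ∀ x y : n, (inner ℝ x y : ℝ) = B x y := fun x y => rfl
  have hPsym : (P : n →ₗ[ℝ] n).IsSymmetric := by
    intro x y
    rw [hinner, hinner, hPB, hPB2]
  -- spectral decomposition
  let b : OrthonormalBasis (Fin (Module.finrank ℝ n)) ℝ n := hPsym.eigenvectorBasis rfl
  let μ : Fin (Module.finrank ℝ n) → ℝ := hPsym.eigenvalues rfl
  have hb : ∀ i, b.toBasis i = b i := fun i => by simp [OrthonormalBasis.coe_toBasis]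
  have hPb' : ∀ i, P (b.toBasis i) = μ i • b.toBasis i := by
    intro i
    rw [hb i]
    exact hPsym.apply_eigenvectorBasis rfl i
  have hμpos : ∀ i, 0 < μ i := by
    intro i
    have hbne : (b.toBasis i : n) ≠ 0 := b.toBasis.ne_zero i
    have h1 : B (P (b.toBasis i)) (b.toBasis i) = μ i * B (b.toBasis i) (b.toBasis i) := by
      rw [hPb' i, map_smul, LinearMap.smul_apply, smul_eq_mul]
    have h2 : 0 < B (P (b.toBasis i)) (b.toBasis i) := hPpos _ hbne
    have h3 : 0 < B (b.toBasis i) (b.toBasis i) := hB.posdef _ hbne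
    nlinarith
  -- the function x ↦ x^{-1/2} applied spectrally
  set g : ℝ → ℝ := fun t => (Real.sqrt t)⁻¹ with hgdef
  have hg1 : ∀ l : ℝ, 0 < l → g l * g l * l = 1 := by
    intro l hl
    have hs : Real.sqrt l * Real.sqrt l = l := Real.mul_self_sqrt hl.le
    simp only [hgdef]
    calc (Real.sqrt l)⁻¹ * (Real.sqrt l)⁻¹ * l = (Real.sqrt l * Real.sqrt l)⁻¹ * l := by
          rw [mul_inv]
      _ = l⁻¹ * l := by rw [hs]
      _ = 1 := inv_mul_cancel₀ (ne_of_gt hl)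
  have hg9 : ∀ l : ℝ, 0 ≤ l → 3 * g (9 * l) = g l := by
    intro l hl
    have h9 : Real.sqrt (9 * l) = 3 * Real.sqrt l := by
      rw [show (9:ℝ) = 3 ^ 2 by norm_num, Real.sqrt_mul (by positivity) l,
        Real.sqrt_sq (by norm_num : (0:ℝ) ≤ 3)]
    simp only [hgdef]
    rw [h9, mul_inv]
    ring
  set F : n →ₗ[ℝ] n := b.toBasis.constr ℝ (fun i => g (μ i) • b.toBasis i) with hFdef
  have hFbasis : ∀ i, F (b.toBasis i) = g (μ i) • b.toBasis i := by
    intro i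
    rw [hFdef, Module.Basis.constr_basis]
  -- baby spectral calculus
  have spec : ∀ (v : n) (l : ℝ), P v = l • v → F v = g l • v := by
    intro v l hv
    have hv' : (∑ i, b.toBasis.repr v i • b.toBasis i) = v := b.toBasis.sum_repr v
    have hco : ∀ i, b.toBasis.repr v i * μ i = l * b.toBasis.repr v i := by
      intro i
      have h1 : P v = ∑ j, (b.toBasis.repr v j * μ j) • b.toBasis j := by
        conv_lhs => rw [← hv']
        rw [map_sum]
        refine Finset.sum_congr rfl fun j _ => ?_
        rw [map_smul, hPb' j, smul_smul]
      have h2 : P v = ∑ j, (l * b.toBasis.repr v j) • b.toBasis j := by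
        rw [hv]
        conv_lhs => rw [← hv']
        rw [Finset.smul_sum]
        exact Finset.sum_congr rfl fun j _ => smul_smul _ _ _
      have h3 := h1.symm.trans h2
      have h5 : (fun j => b.toBasis.repr v j * μ j) = (fun j => l * b.toBasis.repr v j) := by
        calc (fun j => b.toBasis.repr v j * μ j)
            = ⇑(b.toBasis.repr (∑ j, (b.toBasis.repr v j * μ j) • b.toBasis j)) :=
              (b.toBasis.repr_sum_self _).symm
          _ = ⇑(b.toBasis.repr (∑ j, (l * b.toBasis.repr v j) • b.toBasis j)) := by rw [← h3]
          _ = (fun j => l * b.toBasis.repr v j) := b.toBasis.repr_sum_self _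
      exact congrFun h5 i
    have hterm : ∀ i, b.toBasis.repr v i • (g (μ i) • b.toBasis i)
        = g l • (b.toBasis.repr v i • b.toBasis i) := by
      intro i
      rcases eq_or_ne (b.toBasis.repr v i) 0 with h | h
      · rw [h]; simp
      · have hμl : μ i = l := by
          have h6 := hco i
          exact mul_left_cancel₀ h (by linarith)
        rw [hμl, smul_smul, smul_smul, mul_comm]
    calc F v = F (∑ i, b.toBasis.repr v i • b.toBasis i) := by rw [hv']
      _ = ∑ i, b.toBasis.repr v i • F (b.toBasis i) := by
          rw [map_sum]
          exact Finset.sum_congr rfl fun i _ => map_smul F _ _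
      _ = ∑ i, b.toBasis.repr v i • (g (μ i) • b.toBasis i) := by
          exact Finset.sum_congr rfl fun i _ => by rw [hFbasis i]
      _ = ∑ i, g l • (b.toBasis.repr v i • b.toBasis i) :=
          Finset.sum_congr rfl fun i _ => hterm i
      _ = g l • ∑ i, b.toBasis.repr v i • b.toBasis i := (Finset.smul_sum).symm
      _ = g l • v := by rw [hv']
  -- the complex structure
  set J : n →ₗ[ℝ] n := T ∘ₗ F with hJdef
  have hJapp : ∀ x : n, J x = T (F x) := fun x => rfl
  have hFT : ∀ i, F (T (b.toBasis i)) = g (μ i) • T (b.toBasis i) := by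
    intro i
    exact spec _ _ (by rw [hPT, hPb' i, map_smul])
  have hJb : ∀ i, J (b.toBasis i) = g (μ i) • T (b.toBasis i) := by
    intro i
    rw [hJapp, hFbasis i, map_smul]
  have hFbr : ∀ i j, F ⁅b.toBasis i, b.toBasis j⁆
      = g (9 * μ i) • ⁅b.toBasis i, b.toBasis j⁆ := by
    intro i j
    refine spec _ _ ?_
    rw [hPbr2, hPb' i, smul_lie, smul_smul]
  -- property 1 : J² = -1
  have hJJ : J ∘ₗ J = -LinearMap.id := by
    refine b.toBasis.ext fun i => ?_
    have h2 : J (T (b.toBasis i)) = g (μ i) • T (T (b.toBasis i)) := by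
      rw [hJapp, hFT i, map_smul]
    rw [LinearMap.comp_apply, hJb i, map_smul, h2, hTT, hPb' i,
      LinearMap.neg_apply, LinearMap.id_apply]
    rw [smul_neg, smul_neg, smul_smul, smul_smul]
    rw [show g (μ i) * g (μ i) * μ i = 1 from hg1 (μ i) (hμpos i), one_smul]
  have goal1 : ∀ x : n, J (J x) = -x := by
    intro x
    have h := LinearMap.congr_fun hJJ x
    simpa using h
  -- the bracket as a bilinear map
  set Lbr : n →ₗ[ℝ] n →ₗ[ℝ] n :=
    LinearMap.mk₂ ℝ (fun x y => ⁅x, y⁆) add_lie smul_lie lie_add lie_smul with hLdef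
  -- property 2 : J ⁅x, y⁆ = ⁅J x, y⁆
  have heq2 : Lbr.compr₂ J = Lbr.comp J := by
    refine LinearMap.ext_basis b.toBasis b.toBasis fun i j => ?_
    show J ⁅b.toBasis i, b.toBasis j⁆ = ⁅J (b.toBasis i), b.toBasis j⁆
    calc J ⁅b.toBasis i, b.toBasis j⁆
        = T (F ⁅b.toBasis i, b.toBasis j⁆) := hJapp _
      _ = T (g (9 * μ i) • ⁅b.toBasis i, b.toBasis j⁆) := by rw [hFbr i j]
      _ = g (9 * μ i) • T ⁅b.toBasis i, b.toBasis j⁆ := map_smul _ _ _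
      _ = g (9 * μ i) • ((3:ℝ) • ⁅T (b.toBasis i), b.toBasis j⁆) := by rw [hG2]
      _ = (3 * g (9 * μ i)) • ⁅T (b.toBasis i), b.toBasis j⁆ := by
          rw [smul_smul, mul_comm]
      _ = g (μ i) • ⁅T (b.toBasis i), b.toBasis j⁆ := by rw [hg9 (μ i) (hμpos i).le]
      _ = ⁅g (μ i) • T (b.toBasis i), b.toBasis j⁆ := (smul_lie _ _ _).symm
      _ = ⁅J (b.toBasis i), b.toBasis j⁆ := by rw [hJb i]
  have goal2 : ∀ x y : n, J ⁅x, y⁆ = ⁅J x, y⁆ := by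
    intro x y
    have h := LinearMap.congr_fun (LinearMap.congr_fun heq2 x) y
    simpa only [LinearMap.compr₂_apply, LinearMap.comp_apply, hLdef,
      LinearMap.mk₂_apply] using h
  -- property 3 : ⁅J x, y⁆ = ⁅x, J y⁆
  have heq3 : Lbr.comp J = Lbr.compl₂ J := by
    refine LinearMap.ext_basis b.toBasis b.toBasis fun i j => ?_
    rw [LinearMap.comp_apply, LinearMap.compl₂_apply, hLdef, LinearMap.mk₂_apply,
      LinearMap.mk₂_apply]
    have k1 : μ i • ⁅b.toBasis i, T (b.toBasis j)⁆ = μ j • ⁅b.toBasis i, T (b.toBasis j)⁆ := by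
      have e1 : ⁅P (b.toBasis i), T (b.toBasis j)⁆ = ⁅b.toBasis i, P (T (b.toBasis j))⁆ :=
        hPbr1 _ _
      rw [hPb' i, hPT, hPb' j, map_smul, smul_lie, lie_smul] at e1
      exact e1
    rw [hJb i, hJb j, smul_lie, lie_smul, hG1]
    rcases eq_or_ne (μ i) (μ j) with he | he
    · rw [he]
    · have h0 : (⁅b.toBasis i, T (b.toBasis j)⁆ : n) = 0 := by
        have h4 : (μ i - μ j) • ⁅b.toBasis i, T (b.toBasis j)⁆ = 0 := by
          rw [sub_smul, k1, sub_self]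
        exact (smul_eq_zero.mp h4).resolve_left (sub_ne_zero.mpr he)
      rw [h0, smul_zero, smul_zero]
  have goal3 : ∀ x y : n, ⁅J x, y⁆ = ⁅x, J y⁆ := by
    intro x y
    have h := LinearMap.congr_fun (LinearMap.congr_fun heq3 x) y
    simpa only [LinearMap.comp_apply, LinearMap.compl₂_apply, hLdef,
      LinearMap.mk₂_apply] using h
  -- property 4 : orthogonality
  have heq4 : B.compl₁₂ J J = B := by
    refine LinearMap.ext_basis b.toBasis b.toBasis fun i j => ?_
    show B (J (b.toBasis i)) (J (b.toBasis j)) = B (b.toBasis i) (b.toBasis j)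
    have hsmulB : ∀ (a c : ℝ) (u v : n), B (a • u) (c • v) = a * (c * B u v) := by
      intro a c u v
      simp only [map_smul, LinearMap.smul_apply, smul_eq_mul]
      ring
    have hTT' : B (T (b.toBasis i)) (T (b.toBasis j)) = μ i * B (b.toBasis i) (b.toBasis j) := by
      rw [← hPB, hPb' i, map_smul, LinearMap.smul_apply, smul_eq_mul]
    rw [hJb i, hJb j, hsmulB, hTT']
    rcases eq_or_ne i j with he | he
    · subst he
      rw [show g (μ i) * (g (μ i) * (μ i * B (b.toBasis i) (b.toBasis i)))
          = (g (μ i) * g (μ i) * μ i) * B (b.toBasis i) (b.toBasis i) by ring,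
        hg1 (μ i) (hμpos i), one_mul]
    · have hBij : B (b.toBasis i) (b.toBasis j) = 0 := by
        rw [hb i, hb j]
        exact b.orthonormal.2 he
      rw [hBij]
      ring
  have goal4 : ∀ x y : n, B (J x) (J y) = B x y := by
    intro x y
    have h := LinearMap.congr_fun (LinearMap.congr_fun heq4 x) y
    simpa only [LinearMap.compl₁₂_apply] using h
  exact ⟨J, goal1, goal2, goal3, goal4⟩
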